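/- arXiv:1805.02147 — 2 statements merged into one kernel-verified Lean document; each statement's English description precedes it below -/
import Mathlib

section
/- If M is a strong k-chromatic-choosable graph with n vertices and m edges satisfying m ≤ n(k−2), then for every n' ≥ 1 the Cartesian product M □ P_{n'} with a path is chromatic-choosable: χ_ℓ(M □ P_{n'}) = χ(M □ P_{n'}) = k. -/
open SimpleGraph Finset

section ListColoringDefs

variable {V : Type*}

/-- `f` is a proper coloring of `G` choosing each color from the list `L v`. -/
def IsProperListColoring (G : SimpleGraph V) (L : V → Finset ℕ) (f : V → ℕ) : Prop :=
  (∀ v, f v ∈ L v) ∧ ∀ u v, G.Adj u v → f u ≠ f v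

/-- `G` admits a proper coloring from the list assignment `L`. -/
def ListColorable (G : SimpleGraph V) (L : V → Finset ℕ) : Prop :=
  ∃ f, IsProperListColoring G L f

/-- `G` is colorable from every list assignment with lists of size at least `m`. -/
def Choosable (G : SimpleGraph V) (m : ℕ) : Prop :=
  ∀ L : V → Finset ℕ, (∀ v, m ≤ (L v).card) → ListColorable G L

/-- The list chromatic number of `G`. -/
noncomputable def listChromaticNumber (G : SimpleGraph V) : ℕ :=
  sInf { m | Choosable G m }

/-- `G` is strong `k`-chromatic-choosable: `χ(G) = k` and every `(k-1)`-assignment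
from which `G` is not colorable is constant. -/
def StrongCC (G : SimpleGraph V) (k : ℕ) : Prop :=
  G.chromaticNumber = (k : ℕ∞) ∧
    ∀ L : V → Finset ℕ, (∀ v, (L v).card = k - 1) → ¬ ListColorable G L →
      ∀ u v : V, L u = L v

/-- The number of proper `L`-colorings of `G`. -/
noncomputable def numColorings (G : SimpleGraph V) (L : V → Finset ℕ) : ℕ :=
  Set.ncard { f : V → ℕ | IsProperListColoring G L f }

/-- The list color function `P_ℓ(G,k)`: the minimum number of proper `L`-colorings
over all `k`-assignments `L`. -/
noncomputable def listColorFunction (G : SimpleGraph V) (k : ℕ) : ℕ :=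
  sInf { n | ∃ L : V → Finset ℕ, (∀ v, (L v).card = k) ∧ n = numColorings G L }

/-- The chromatic polynomial `P(G,k)`: the number of proper colorings with colors
from `{0, …, k-1}`. -/
noncomputable def chromPoly (G : SimpleGraph V) (k : ℕ) : ℕ :=
  numColorings G (fun _ => Finset.range k)

/-- The join `G ∨ K_p` of `G` with the complete graph on `p` vertices. -/
def joinK (G : SimpleGraph V) (p : ℕ) : SimpleGraph (V ⊕ Fin p) :=
  SimpleGraph.fromRel (fun a b =>
    match a, b with
    | Sum.inl u, Sum.inl v => G.Adj u v
    | _, _ => True)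

/-- The star `K_{1,s}`: center `none` adjacent to the `s` leaves. -/
def starGraph (s : ℕ) : SimpleGraph (Option (Fin s)) :=
  SimpleGraph.fromRel (fun a _ => a = none)

/-- The cycle graph `C_n` on `Fin n` (for `n ≥ 3`). -/
def cycGraph (n : ℕ) : SimpleGraph (Fin n) :=
  SimpleGraph.fromRel (fun a b => b.val = (a.val + 1) % n)

end ListColoringDefs

set_option linter.unusedVariables false

set_option linter.unusedSectionVars false

section Lag
open Polynomial

lemma coeff_basis_top (S : Finset ℚ) (i : ℚ) (hi : i ∈ S) :
    (Lagrange.basis S id i).coeff (S.card - 1) = (∏ b ∈ S.erase i, (i - b))⁻¹ := by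
  classical
  have hinj : Set.InjOn (id : ℚ → ℚ) S := Function.injective_id.injOn
  have hnd : (Lagrange.basis S id i).natDegree = S.card - 1 :=
    Lagrange.natDegree_basis hinj hi
  rw [← hnd, Polynomial.coeff_natDegree]
  unfold Lagrange.basis
  rw [leadingCoeff_prod]
  rw [← prod_inv_distrib]
  apply Finset.prod_congr rfl
  intro j hj
  have hij : (i : ℚ) ≠ j := by
    have := (mem_erase.mp hj).1
    simpa [eq_comm] using this
  rw [Lagrange.basisDivisor]
  simp [leadingCoeff_mul, hij, sub_ne_zero.mpr hij]

lemma lag_sum (S : Finset ℚ) (hS : S.Nonempty) (e : ℕ) (he : e ≤ S.card - 1) :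
    (∑ i ∈ S, i ^ e * (∏ b ∈ S.erase i, (i - b))⁻¹) = if e = S.card - 1 then 1 else 0 := by
  classical
  have hinj : Set.InjOn (id : ℚ → ℚ) S := Function.injective_id.injOn
  have hdeg : ((X : ℚ[X]) ^ e).degree < S.card := by
    rw [degree_X_pow]
    exact_mod_cast lt_of_le_of_lt (Nat.cast_le.mpr he)
      (Nat.cast_lt.mpr (Nat.sub_lt hS.card_pos Nat.one_pos))
  have h := Lagrange.eq_interpolate (f := (X : ℚ[X]) ^ e) hinj hdeg
  have h2 := congrArg (fun p => Polynomial.coeff p (S.card - 1)) h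
  simp only [Lagrange.interpolate_apply] at h2
  rw [Polynomial.finset_sum_coeff] at h2
  have h3 : ∀ i ∈ S, (C (eval (id i) ((X:ℚ[X])^e)) * Lagrange.basis S id i).coeff (S.card - 1)
      = i ^ e * (∏ b ∈ S.erase i, (i - b))⁻¹ := by
    intro i hi
    rw [coeff_C_mul, coeff_basis_top S i hi]
    simp
  rw [Finset.sum_congr rfl h3] at h2
  rw [← h2, Polynomial.coeff_X_pow]
  simp [eq_comm]
end Lag

open MvPolynomial in
lemma coeff_eq_grid_sum {V : Type*} [Fintype V] [DecidableEq V] (S : V → Finset ℚ)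
    (hS : ∀ v, (S v).Nonempty) (p : MvPolynomial V ℚ)
    (hdeg : p.totalDegree ≤ ∑ v, ((S v).card - 1)) :
    MvPolynomial.coeff (Finsupp.equivFunOnFinite.symm fun v => (S v).card - 1) p =
      ∑ x ∈ Fintype.piFinset S, MvPolynomial.eval x p *
        ∏ v, (∏ b ∈ (S v).erase (x v), (x v - b))⁻¹ := by
  classical
  set t : V → ℕ := fun v => (S v).card - 1 with ht
  set w : V → ℚ → ℚ := fun v i => (∏ b ∈ (S v).erase i, (i - b))⁻¹ with hw
  set T : V →₀ ℕ := Finsupp.equivFunOnFinite.symm t with hT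
  -- monomial computation
  have key : ∀ (d : V →₀ ℕ) (a : ℚ),
      ∑ x ∈ Fintype.piFinset S, MvPolynomial.eval x (monomial d a) * ∏ v, w v (x v)
      = a * ∏ v, (∑ i ∈ S v, i ^ d v * w v i) := by
    intro d a
    have h1 : ∀ x : V → ℚ, MvPolynomial.eval x (monomial d a) = a * ∏ v, x v ^ d v := by
      intro x
      rw [MvPolynomial.eval_monomial]
      congr 1
      exact Finsupp.prod_fintype _ _ (fun v => pow_zero (x v))
    calc ∑ x ∈ Fintype.piFinset S, MvPolynomial.eval x (monomial d a) * ∏ v, w v (x v)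
        = ∑ x ∈ Fintype.piFinset S, a * ∏ v, (x v ^ d v * w v (x v)) := by
          apply Finset.sum_congr rfl; intro x _
          rw [h1, prod_mul_distrib, mul_assoc]
      _ = a * ∑ x ∈ Fintype.piFinset S, ∏ v, (x v ^ d v * w v (x v)) := by
          rw [Finset.mul_sum]
      _ = a * ∏ v, (∑ i ∈ S v, i ^ d v * w v i) := by
          rw [Finset.prod_univ_sum]
  have hsupp : ∀ d ∈ p.support, (MvPolynomial.coeff T (monomial d (MvPolynomial.coeff d p)))
      = ∑ x ∈ Fintype.piFinset S, MvPolynomial.eval x (monomial d (MvPolynomial.coeff d p)) *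
          ∏ v, w v (x v) := by
    intro d hd
    rw [key, MvPolynomial.coeff_monomial]
    have hTv : ∀ v, T v = t v := fun v => rfl
    have hdsum : (∑ v, d v) ≤ ∑ v, t v := by
      refine le_trans ?_ hdeg
      have h2 := MvPolynomial.le_totalDegree hd
      rw [Finsupp.sum_fintype] at h2
      · exact h2
      · intro _; rfl
    by_cases hall : ∀ v, d v ≤ t v
    · have hfac : ∀ v, (∑ i ∈ S v, i ^ d v * w v i) = if d v = t v then 1 else 0 :=
        fun v => lag_sum (S v) (hS v) (d v) (hall v)
      rw [Finset.prod_congr rfl (fun v _ => hfac v)]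
      by_cases hdT : d = T
      · have hdv : ∀ v, d v = t v := fun v => by rw [hdT]; rfl
        simp [hdv, hdT, hTv]
      · have hex : ∃ v, d v ≠ t v := by
          by_contra h
          push_neg at h
          exact hdT (Finsupp.ext fun v => by rw [h v, hTv])
        obtain ⟨v0, hv0⟩ := hex
        rw [Finset.prod_eq_zero (mem_univ v0) (by simp [hv0])]
        simp [hdT]
    · push_neg at hall
      obtain ⟨v0, hv0⟩ := hall
      have hdT : d ≠ T := by
        intro h
        rw [h] at hv0
        exact absurd (hTv v0).le (by omega)
      have hex : ∃ u, d u < t u := by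
        by_contra h
        push_neg at h
        have : ∑ v, t v < ∑ v, d v :=
          Finset.sum_lt_sum (fun i _ => h i) ⟨v0, mem_univ _, by omega⟩
        omega
      obtain ⟨u, hu⟩ := hex
      rw [Finset.prod_eq_zero (mem_univ u)
        (by rw [lag_sum (S u) (hS u) (d u) hu.le]; simp [Nat.ne_of_lt hu]; exact Nat.ne_of_lt hu)]
      simp [hdT]
  conv_lhs => rw [MvPolynomial.as_sum p]
  rw [MvPolynomial.coeff_sum, Finset.sum_congr rfl hsupp]
  have hx : ∀ x : V → ℚ, MvPolynomial.eval x p * ∏ v, w v (x v)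
      = ∑ d ∈ p.support, MvPolynomial.eval x (monomial d (MvPolynomial.coeff d p)) *
          ∏ v, w v (x v) := by
    intro x
    conv_lhs => rw [MvPolynomial.as_sum p]
    rw [map_sum, Finset.sum_mul]
  rw [Finset.sum_congr rfl (fun x _ => hx x), Finset.sum_comm]

open Finset MvPolynomial

section GP
variable {V : Type*} [Fintype V] [DecidableEq V]

lemma sym2_mk_out (e : Sym2 V) : s(e.out.1, e.out.2) = e := by
  rw [Sym2.mk, Prod.mk.eta, e.out_eq]

noncomputable def gPoly (M : SimpleGraph V) [Fintype M.edgeSet] : MvPolynomial V ℚ :=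
  ∏ e ∈ M.edgeFinset, (X e.out.1 - X e.out.2)

lemma gPoly_tdeg (M : SimpleGraph V) [Fintype M.edgeSet] :
    (gPoly M).totalDegree ≤ M.edgeFinset.card := by
  refine le_trans (totalDegree_finset_prod _ _) ?_
  calc ∑ e ∈ M.edgeFinset, (X e.out.1 - X e.out.2 : MvPolynomial V ℚ).totalDegree
      ≤ ∑ _e ∈ M.edgeFinset, 1 := Finset.sum_le_sum (fun e _ => by
        refine le_trans (totalDegree_sub _ _) ?_
        simp [totalDegree_X])
    _ = M.edgeFinset.card := by simp

lemma gPoly_eval_ne_zero_iff (M : SimpleGraph V) [Fintype M.edgeSet] (x : V → ℚ) :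
    eval x (gPoly M) ≠ 0 ↔ ∀ u v, M.Adj u v → x u ≠ x v := by
  rw [gPoly, map_prod, Finset.prod_ne_zero_iff]
  constructor
  · intro h u v huv hx
    have he : s(u,v) ∈ M.edgeFinset := by
      rw [SimpleGraph.mem_edgeFinset]; exact huv
    have h2 := h _ he
    have h3 : s((s(u,v) : Sym2 V).out.1, (s(u,v) : Sym2 V).out.2) = s(u,v) := sym2_mk_out _
    rw [Sym2.eq_iff] at h3
    simp only [map_sub, eval_X] at h2
    rcases h3 with ⟨h4,h5⟩|⟨h4,h5⟩ <;> rw [h4, h5] at h2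
    · exact h2 (by rw [hx, sub_self])
    · exact h2 (by rw [hx, sub_self])
  · intro h e he
    have hadj : M.Adj e.out.1 e.out.2 := by
      have h1 := SimpleGraph.mem_edgeFinset.mp he
      rw [← sym2_mk_out e] at h1
      exact h1
    simp only [map_sub, eval_X]
    exact sub_ne_zero.mpr (h _ _ hadj)
end GP

section LemU
variable {V : Type*} [Fintype V] [DecidableEq V]

lemma exists_second_coloring (M : SimpleGraph V) [Fintype M.edgeSet] (k : ℕ) (hk : 3 ≤ k)
    (hcol : ¬ M.Colorable (k-1)) (hm : M.edgeFinset.card ≤ Fintype.card V * (k-2))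
    (R : V → Finset ℕ) (hR : ∀ v, k-1 ≤ (R v).card) (c : V → ℕ)
    (hc : IsProperListColoring M R c) :
    ∃ c', IsProperListColoring M R c' ∧ c' ≠ c := by
  by_contra hcon
  push_neg at hcon
  have huniq : ∀ c', IsProperListColoring M R c' → c' = c := hcon
  set S : V → Finset ℚ := fun v => (R v).image (Nat.cast) with hS
  have hcardS : ∀ v, (S v).card = (R v).card := fun v =>
    Finset.card_image_of_injective _ Nat.cast_injective
  have hSne : ∀ v, (S v).Nonempty := fun v => by
    rw [← Finset.card_pos, hcardS]
    have := hR v; omega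
  set P := gPoly M with hP
  have hsum_ge : Fintype.card V * (k-2) ≤ ∑ v : V, ((S v).card - 1) := by
    have h1 : ∀ v ∈ (univ : Finset V), k - 2 ≤ (S v).card - 1 := fun v _ => by
      rw [hcardS]; have := hR v; omega
    calc Fintype.card V * (k-2) = ∑ _v : V, (k-2) := by
          rw [Finset.sum_const, smul_eq_mul, Finset.card_univ]
      _ ≤ ∑ v : V, ((S v).card - 1) := Finset.sum_le_sum h1
  have hdeg : P.totalDegree ≤ ∑ v, ((S v).card - 1) :=
    le_trans (gPoly_tdeg M) (le_trans hm hsum_ge)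
  set x0 : V → ℚ := fun v => (c v : ℚ) with hx0def
  have hx0 : x0 ∈ Fintype.piFinset S := by
    rw [Fintype.mem_piFinset]
    intro v
    exact Finset.mem_image_of_mem _ (hc.1 v)
  have hx0P : eval x0 P ≠ 0 := (gPoly_eval_ne_zero_iff M x0).mpr (fun u v huv => by
    have := hc.2 u v huv
    simpa [hx0def, Nat.cast_inj] using this)
  have hW : ∀ (T : V → Finset ℚ) (x : V → ℚ),
      (∏ v, (∏ b ∈ (T v).erase (x v), (x v - b))⁻¹) ≠ 0 := by
    intro T x
    apply Finset.prod_ne_zero_iff.mpr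
    intro v _
    apply inv_ne_zero
    apply Finset.prod_ne_zero_iff.mpr
    intro b hb
    have : b ≠ x v := (Finset.mem_erase.mp hb).1
    exact sub_ne_zero.mpr (Ne.symm this)
  have honly : ∀ x ∈ Fintype.piFinset S, x ≠ x0 → eval x P = 0 := by
    intro x hx hne
    by_contra hPx
    have hmem : ∀ v, ∃ a ∈ R v, (a:ℚ) = x v := fun v => by
      have h2 := (Fintype.mem_piFinset.mp hx) v
      rw [hS] at h2
      simpa using h2
    choose g hg1 hg2 using hmem
    have hgp : IsProperListColoring M R g := by
      refine ⟨hg1, fun u v huv hguv => ?_⟩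
      exact ((gPoly_eval_ne_zero_iff M x).mp hPx) u v huv (by rw [← hg2 u, ← hg2 v, hguv])
    have hgc := huniq g hgp
    apply hne
    funext v
    rw [← hg2 v, hgc]
  have hcoeff := coeff_eq_grid_sum S hSne P hdeg
  have hsingle : ∑ x ∈ Fintype.piFinset S, eval x P *
        (∏ v, (∏ b ∈ (S v).erase (x v), (x v - b))⁻¹)
      = eval x0 P * (∏ v, (∏ b ∈ (S v).erase (x0 v), (x0 v - b))⁻¹) :=
    Finset.sum_eq_single_of_mem x0 hx0 (fun x hx hne => by rw [honly x hx hne, zero_mul])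
  have hcoeff_ne :
      MvPolynomial.coeff (Finsupp.equivFunOnFinite.symm fun v => (S v).card - 1) P ≠ 0 := by
    rw [hcoeff, hsingle]
    exact mul_ne_zero hx0P (hW S x0)
  by_cases hlt : M.edgeFinset.card < ∑ v, ((S v).card - 1)
  · apply hcoeff_ne
    apply coeff_eq_zero_of_totalDegree_lt
    have hsupp : ∑ i ∈ (Finsupp.equivFunOnFinite.symm fun v => (S v).card - 1).support,
        (Finsupp.equivFunOnFinite.symm fun v => (S v).card - 1) i = ∑ v, ((S v).card - 1) := by
      apply Finset.sum_subset (Finset.subset_univ _)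
      intro x _ hx
      exact Finsupp.notMem_support_iff.mp hx
    rw [hsupp]
    exact lt_of_le_of_lt (gPoly_tdeg M) hlt
  · have heq : ∑ v, ((S v).card - 1) = M.edgeFinset.card := by omega
    have hall : ∀ v, (S v).card - 1 = k - 2 := by
      by_contra h
      push_neg at h
      obtain ⟨v0, hv0⟩ := h
      have h1 : ∀ v ∈ (univ : Finset V), k-2 ≤ (S v).card - 1 := fun v _ => by
        rw [hcardS]; have := hR v; omega
      have h2 : (Fintype.card V) * (k-2) < ∑ v, ((S v).card - 1) := by
        have h3 := Finset.sum_lt_sum h1 ⟨v0, mem_univ _,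
          lt_of_le_of_ne (h1 v0 (mem_univ _)) (Ne.symm hv0)⟩
        calc Fintype.card V * (k-2) = ∑ _v : V, (k-2) := by
              rw [Finset.sum_const, smul_eq_mul, Finset.card_univ]
          _ < _ := h3
      omega
    set S' : V → Finset ℚ := fun _v => (Finset.range (k-1)).image Nat.cast with hS'
    have hcardS' : ∀ v, (S' v).card = k-1 := fun v => by
      simp only [hS']
      rw [Finset.card_image_of_injective (Finset.range (k-1)) Nat.cast_injective,
        Finset.card_range]
    have hS'ne : ∀ v, (S' v).Nonempty := fun v => by
      rw [← Finset.card_pos, hcardS' v]; omega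
    have hT'eq : (fun v => (S' v).card - 1) = (fun v => (S v).card - 1) := funext fun v => by
      rw [hcardS' v, hall v]
      omega
    have hdeg' : P.totalDegree ≤ ∑ v, ((S' v).card - 1) := by
      have : ∑ v, ((S' v).card - 1) = ∑ v, ((S v).card - 1) := by rw [hT'eq]
      rw [this]; exact hdeg
    have hcoeff' := coeff_eq_grid_sum S' hS'ne P hdeg'
    rw [hT'eq] at hcoeff'
    have hex : ∃ x ∈ Fintype.piFinset S', eval x P ≠ 0 := by
      by_contra hno
      push_neg at hno
      apply hcoeff_ne
      rw [hcoeff']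
      apply Finset.sum_eq_zero
      intro x hx
      rw [hno x hx, zero_mul]
    obtain ⟨x, hx, hxP⟩ := hex
    have hmem : ∀ v, ∃ a ∈ Finset.range (k-1), (a:ℚ) = x v := fun v => by
      have h2 := (Fintype.mem_piFinset.mp hx) v
      rw [hS'] at h2
      simpa using h2
    choose g hg1 hg2 using hmem
    apply hcol
    refine ⟨SimpleGraph.Coloring.mk (fun v => ⟨g v, Finset.mem_range.mp (hg1 v)⟩) ?_⟩
    intro u v huv
    simp only [Ne, Fin.mk.injEq]
    intro hguv
    exact ((gPoly_eval_ne_zero_iff M x).mp hxP) u v huv (by rw [← hg2 u, ← hg2 v, hguv])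

end LemU

section Util
variable {V : Type*}

lemma listColorable_mono (G : SimpleGraph V) (L L' : V → Finset ℕ) (h : ∀ v, L v ⊆ L' v) :
    ListColorable G L → ListColorable G L' := by
  rintro ⟨f, hf1, hf2⟩
  exact ⟨f, fun v => h v (hf1 v), hf2⟩

lemma noncolorable_const (M : SimpleGraph V) (k : ℕ) (hk : 3 ≤ k)
    (hscc : ∀ L : V → Finset ℕ, (∀ v, (L v).card = k - 1) → ¬ ListColorable M L →
      ∀ u v : V, L u = L v)
    (u₀ v₀ : V) (huv : u₀ ≠ v₀)
    (R : V → Finset ℕ) (hR : ∀ v, k - 1 ≤ (R v).card) (hnc : ¬ ListColorable M R) :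
    ∃ A : Finset ℕ, (∀ v, R v = A) ∧ A.card = k - 1 := by
  classical
  have hT : ∀ v, ∃ t ⊆ R v, t.card = k - 1 := fun v =>
    Finset.exists_subset_card_eq (hR v)
  choose T hT1 hT2 using hT
  have hTnc : ¬ ListColorable M T := fun h => hnc (listColorable_mono M T R hT1 h)
  have hTconst := hscc T hT2 hTnc
  -- all cards equal k-1
  have hcards : ∀ v, (R v).card = k - 1 := by
    intro v
    by_contra hv
    have hlt : (T v).card < (R v).card := by
      have := hR v; have := hT2 v; omega
    have hne : T v ≠ R v := fun h => by rw [h] at hlt; omega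
    obtain ⟨x, hx1, hx2⟩ := Finset.exists_of_ssubset ((hT1 v).ssubset_of_ne hne)
    obtain ⟨y, hy⟩ : (T v).Nonempty := by
      rw [← Finset.card_pos, hT2 v]; omega
    set Tv' : Finset ℕ := insert x ((T v).erase y) with hTv'
    have hTv'card : Tv'.card = k - 1 := by
      rw [hTv', Finset.card_insert_of_notMem (fun hc => hx2 (Finset.mem_of_mem_erase hc)),
        Finset.card_erase_of_mem hy, hT2 v]
      omega
    have hTv'sub : Tv' ⊆ R v := by
      intro a ha
      rcases Finset.mem_insert.mp ha with rfl | ha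
      · exact hx1
      · exact hT1 v (Finset.mem_of_mem_erase ha)
    set T2 : V → Finset ℕ := Function.update T v Tv' with hT2def
    have hT2cards : ∀ w, (T2 w).card = k - 1 := by
      intro w
      by_cases hw : w = v
      · subst hw; rw [hT2def, Function.update_self]; exact hTv'card
      · rw [hT2def, Function.update_of_ne hw]; exact hT2 w
    have hT2sub : ∀ w, T2 w ⊆ R w := by
      intro w
      by_cases hw : w = v
      · subst hw; rw [hT2def, Function.update_self]; exact hTv'sub
      · rw [hT2def, Function.update_of_ne hw]; exact hT1 w
    have hT2nc : ¬ ListColorable M T2 := fun h => hnc (listColorable_mono M T2 R hT2sub h)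
    have hT2const := hscc T2 hT2cards hT2nc
    -- pick w ≠ v
    obtain ⟨w, hwv⟩ : ∃ w : V, w ≠ v := by
      by_cases h : u₀ = v
      · exact ⟨v₀, fun hc => huv (h.trans hc.symm)⟩
      · exact ⟨u₀, h⟩
    have h1 : T v = T w := hTconst v w
    have h2 : T2 v = T2 w := hT2const v w
    rw [hT2def, Function.update_self, Function.update_of_ne hwv] at h2
    have : Tv' = T v := h2.trans h1.symm
    apply hx2
    rw [← this, hTv']
    exact Finset.mem_insert_self _ _
  -- T = R
  have hTR : ∀ v, T v = R v := fun v =>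
    Finset.eq_of_subset_of_card_le (hT1 v) (by rw [hT2 v, hcards v])
  refine ⟨R u₀, fun v => ?_, by rw [hcards u₀]⟩
  rw [← hTR v, ← hTR u₀]
  exact hTconst v u₀

end Util

section Util2
variable {V : Type*}

/-- `M` is colorable from any assignment with lists of size `≥ k`. -/
lemma colorable_of_big (M : SimpleGraph V) (k : ℕ) (hk : 3 ≤ k)
    (hscc : ∀ L : V → Finset ℕ, (∀ v, (L v).card = k - 1) → ¬ ListColorable M L →
      ∀ u v : V, L u = L v)
    (u₀ v₀ : V) (huv : u₀ ≠ v₀)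
    (W : V → Finset ℕ) (hW : ∀ v, k ≤ (W v).card) : ListColorable M W := by
  by_contra hnc
  obtain ⟨A, hA1, hA2⟩ := noncolorable_const M k hk hscc u₀ v₀ huv W
    (fun v => by have := hW v; omega) hnc
  have := hW u₀
  rw [hA1 u₀, hA2] at this
  omega

/-- at most one "bad" previous-layer coloring -/
lemma not_both_bad (M : SimpleGraph V) (k : ℕ) (hk : 3 ≤ k)
    (hscc : ∀ L : V → Finset ℕ, (∀ v, (L v).card = k - 1) → ¬ ListColorable M L →
      ∀ u v : V, L u = L v)
    (u₀ v₀ : V) (hadj : M.Adj u₀ v₀)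
    (W : V → Finset ℕ) (hW : ∀ v, k ≤ (W v).card)
    (c₁ c₂ : V → ℕ) (hp1 : ∀ u v, M.Adj u v → c₁ u ≠ c₁ v)
    (hp2 : ∀ u v, M.Adj u v → c₂ u ≠ c₂ v) (hne : c₁ ≠ c₂)
    (hb1 : ¬ ListColorable M (fun v => (W v).erase (c₁ v)))
    (hb2 : ¬ ListColorable M (fun v => (W v).erase (c₂ v))) : False := by
  classical
  have huv : u₀ ≠ v₀ := M.ne_of_adj hadj
  have hcard : ∀ (c : V → ℕ) (v : V), k - 1 ≤ ((W v).erase (c v)).card := by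
    intro c v
    have h1 := hW v
    have h2 := Finset.card_erase_of_mem (s := W v) (a := c v)
    by_cases hm : c v ∈ W v
    · rw [h2 hm]; omega
    · rw [Finset.erase_eq_of_notMem hm]; omega
  obtain ⟨A, hA1, hA2⟩ := noncolorable_const M k hk hscc u₀ v₀ huv _ (hcard c₁) hb1
  obtain ⟨B, hB1, hB2⟩ := noncolorable_const M k hk hscc u₀ v₀ huv _ (hcard c₂) hb2
  -- c v ∈ W v and card W v = k
  have hstruct : ∀ (c : V → ℕ) (A' : Finset ℕ), (∀ v, (W v).erase (c v) = A') →
      A'.card = k - 1 → ∀ v, c v ∈ W v ∧ (W v).card = k ∧ (W v) \ A' = {c v} := by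
    intro c A' hA' hcA' v
    have h1 : c v ∈ W v := by
      by_contra hm
      have hEq : W v = A' := by rw [← hA' v, Finset.erase_eq_of_notMem hm]
      have h6 := hW v
      rw [hEq, hcA'] at h6
      omega
    have h2 : (W v).card = k := by
      have h3 := Finset.card_erase_of_mem h1
      rw [hA' v, hcA'] at h3
      have := hW v
      omega
    refine ⟨h1, h2, ?_⟩
    have h4 : W v = insert (c v) A' := by
      rw [← hA' v, Finset.insert_erase h1]
    have h5 : c v ∉ A' := by
      rw [← hA' v]
      exact Finset.notMem_erase _ _
    rw [h4]
    ext a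
    simp only [Finset.mem_sdiff, Finset.mem_insert, Finset.mem_singleton]
    constructor
    · rintro ⟨rfl | ha, hna⟩
      · rfl
      · exact absurd ha hna
    · rintro rfl
      exact ⟨Or.inl rfl, h5⟩
  have hs1 := hstruct c₁ A hA1 hA2
  have hs2 := hstruct c₂ B hB1 hB2
  by_cases hAB : A = B
  · subst hAB
    apply hne
    funext v
    have h1 := (hs1 v).2.2
    have h2 := (hs2 v).2.2
    have : ({c₁ v} : Finset ℕ) = {c₂ v} := by rw [← h1, ← h2]
    simpa using this
  · -- W v = A ∪ B for all v; c₁ constant; contradiction with edge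
    have hWeq : ∀ v, W v = A ∪ B := by
      intro v
      have hsubA : A ⊆ W v := by
        rw [← hA1 v]; exact Finset.erase_subset _ _
      have hsubB : B ⊆ W v := by
        rw [← hB1 v]; exact Finset.erase_subset _ _
      have hsub : A ∪ B ⊆ W v := Finset.union_subset hsubA hsubB
      have hcardAB : k ≤ (A ∪ B).card := by
        obtain ⟨b, hb1', hb2'⟩ : ∃ b ∈ B, b ∉ A := by
          by_contra h
          push_neg at h
          exact hAB (Finset.eq_of_subset_of_card_le h (by omega)).symm
        have : insert b A ⊆ A ∪ B := by
          intro a ha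
          rcases Finset.mem_insert.mp ha with rfl | ha
          · exact Finset.mem_union_right _ hb1'
          · exact Finset.mem_union_left _ ha
        have h2 := Finset.card_le_card this
        rw [Finset.card_insert_of_notMem hb2', hA2] at h2
        omega
      exact (Finset.eq_of_subset_of_card_le hsub (by rw [(hs1 v).2.1]; exact hcardAB)).symm
    -- c₁ u₀ = c₁ v₀
    apply hp1 u₀ v₀ hadj
    have h1 : c₁ u₀ ∈ W u₀ \ A := by rw [(hs1 u₀).2.2]; exact Finset.mem_singleton_self _
    have h2 : W u₀ \ A = W v₀ \ A := by rw [hWeq u₀, hWeq v₀]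
    rw [h2, (hs1 v₀).2.2] at h1
    exact Finset.mem_singleton.mp h1

end Util2

section Layer
variable {V : Type*} [Fintype V] [DecidableEq V]

lemma layer_induction (M : SimpleGraph V) [Fintype M.edgeSet] (k : ℕ) (hk : 3 ≤ k)
    (hscc : ∀ L : V → Finset ℕ, (∀ v, (L v).card = k - 1) → ¬ ListColorable M L →
      ∀ u v : V, L u = L v)
    (u₀ v₀ : V) (hadj : M.Adj u₀ v₀)
    (hcol : ¬ M.Colorable (k-1)) (hm : M.edgeFinset.card ≤ Fintype.card V * (k-2))
    (L' : V → ℕ → Finset ℕ) (hL : ∀ v j, k ≤ (L' v j).card) :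
    ∀ i : ℕ, ∃ f : V → ℕ → ℕ,
      (∀ v, ∀ j ≤ i, f v j ∈ L' v j) ∧
      (∀ j ≤ i, ∀ u v, M.Adj u v → f u j ≠ f v j) ∧
      (∀ j < i, ∀ v, f v (j+1) ≠ f v j) ∧
      ListColorable M (fun v => (L' v (i+1)).erase (f v i)) := by
  classical
  have huv : u₀ ≠ v₀ := M.ne_of_adj hadj
  -- helper: given a proper coloring g of layer lists `Lay`, find good choice for next lists
  have hstep : ∀ (Lay Nxt : V → Finset ℕ) (g : V → ℕ),
      IsProperListColoring M Lay g → (∀ v, k - 1 ≤ (Lay v).card) →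
      (∀ v, k ≤ (Nxt v).card) →
      ∃ h : V → ℕ, IsProperListColoring M Lay h ∧
        ListColorable M (fun v => (Nxt v).erase (h v)) := by
    intro Lay Nxt g hg hLay hNxt
    obtain ⟨g', hg', hgne⟩ := exists_second_coloring M k hk hcol hm Lay hLay g hg
    by_cases hgood : ListColorable M (fun v => (Nxt v).erase (g v))
    · exact ⟨g, hg, hgood⟩
    · refine ⟨g', hg', ?_⟩
      by_contra hbad
      exact not_both_bad M k hk hscc u₀ v₀ hadj Nxt hNxt g g' hg.2 hg'.2
        (Ne.symm hgne) hgood hbad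
  intro i
  induction i with
  | zero =>
    obtain ⟨g, hg⟩ := colorable_of_big M k hk hscc u₀ v₀ huv (fun v => L' v 0)
      (fun v => hL v 0)
    obtain ⟨h, hh, hhgood⟩ := hstep (fun v => L' v 0) (fun v => L' v 1) g hg
      (fun v => by show k - 1 ≤ (L' v 0).card; have := hL v 0; omega) (fun v => hL v 1)
    refine ⟨fun v _ => h v, ?_, ?_, ?_, ?_⟩
    · intro v j hj
      rw [Nat.le_zero.mp hj]
      exact hh.1 v
    · intro j hj u v huv'
      exact hh.2 u v huv'
    · omega
    · exact hhgood
  | succ i ih =>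
    obtain ⟨f, hA, hB, hC, hD⟩ := ih
    obtain ⟨g, hg⟩ := hD
    have hgprop : IsProperListColoring M (fun v => (L' v (i+1)).erase (f v i)) g := hg
    obtain ⟨h, hh, hhgood⟩ := hstep (fun v => (L' v (i+1)).erase (f v i))
      (fun v => L' v (i+2)) g hgprop
      (fun v => by
        show k - 1 ≤ ((L' v (i+1)).erase (f v i)).card
        have h1 := hL v (i+1)
        by_cases hm' : f v i ∈ L' v (i+1)
        · rw [Finset.card_erase_of_mem hm']; omega
        · rw [Finset.erase_eq_of_notMem hm']; omega)
      (fun v => hL v (i+2))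
    refine ⟨fun v j => if j = i+1 then h v else f v j, ?_, ?_, ?_, ?_⟩
    · intro v j hj
      by_cases hji : j = i+1
      · subst hji
        simp only [if_pos rfl]
        exact Finset.mem_of_mem_erase (hh.1 v)
      · simp only [if_neg hji]
        exact hA v j (by omega)
    · intro j hj u v huv'
      by_cases hji : j = i+1
      · subst hji
        simp only [if_pos rfl]
        exact hh.2 u v huv'
      · simp only [if_neg hji]
        exact hB j (by omega) u v huv'
    · intro j hj v
      by_cases hji : j = i
      · subst hji
        simp only [if_pos rfl, if_neg (by omega : ¬ j = j + 1)]
        have := hh.1 v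
        exact Finset.ne_of_mem_erase this
      · have h1 : ¬ (j + 1 = i + 1) := by omega
        have h2 : ¬ (j = i + 1) := by omega
        simp only [if_neg h1, if_neg h2]
        exact hC j (by omega) v
    · simp only [if_pos rfl]
      exact hhgood

end Layer

section Prod
variable {V : Type*} [Fintype V] [DecidableEq V]

open SimpleGraph

lemma product_listColorable (M : SimpleGraph V) [Fintype M.edgeSet] (k : ℕ) (hk : 3 ≤ k)
    (hscc : ∀ L : V → Finset ℕ, (∀ v, (L v).card = k - 1) → ¬ ListColorable M L →
      ∀ u v : V, L u = L v)
    (u₀ v₀ : V) (hadj : M.Adj u₀ v₀)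
    (hcol : ¬ M.Colorable (k-1)) (hm : M.edgeFinset.card ≤ Fintype.card V * (k-2))
    (n' : ℕ) (hn' : 1 ≤ n') (L : V × Fin n' → Finset ℕ) (hL : ∀ p, k ≤ (L p).card) :
    ListColorable (M.boxProd (pathGraph n')) L := by
  classical
  set L' : V → ℕ → Finset ℕ :=
    fun v j => if h : j < n' then L (v, ⟨j, h⟩) else Finset.range k with hL'def
  have hL' : ∀ v j, k ≤ (L' v j).card := by
    intro v j
    show k ≤ (if h : j < n' then L (v, ⟨j, h⟩) else Finset.range k).card
    by_cases h : j < n'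
    · rw [dif_pos h]; exact hL _
    · rw [dif_neg h, Finset.card_range]
  obtain ⟨f, hA, hB, hC, _⟩ := layer_induction M k hk hscc u₀ v₀ hadj hcol hm L' hL' (n'-1)
  refine ⟨fun p => f p.1 p.2.val, ?_, ?_⟩
  · rintro ⟨v, j⟩
    have hj : j.val ≤ n' - 1 := by have := j.isLt; omega
    have h1 := hA v j.val hj
    rw [hL'def] at h1
    simp only [dif_pos j.isLt] at h1
    convert h1 using 2
  · rintro ⟨u, j⟩ ⟨v, j'⟩ hpq
    simp only [SimpleGraph.boxProd_adj, SimpleGraph.pathGraph_adj] at hpq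
    show f u j.val ≠ f v j'.val
    rcases hpq with ⟨hMadj, h2⟩ | ⟨hpadj, h1⟩
    · subst h2
      exact hB j.val (by have := j.isLt; omega) u v hMadj
    · subst h1
      rcases hpadj with h | h
      · have hlt : (j : ℕ) < n' - 1 := by have := j'.isLt; omega
        have h9 := hC j.val hlt u
        rw [h] at h9
        exact (Ne.symm h9)
      · have hlt : (j' : ℕ) < n' - 1 := by have := j.isLt; omega
        have h9 := hC j'.val hlt u
        rw [h] at h9
        exact h9

lemma product_colorable_k (M : SimpleGraph V) (k : ℕ) (hk : 2 ≤ k)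
    (hMk : M.Colorable k) (n' : ℕ) :
    (M.boxProd (pathGraph n')).Colorable k := by
  obtain ⟨c⟩ := hMk
  refine ⟨SimpleGraph.Coloring.mk
    (fun p => ⟨((c p.1).val + p.2.val) % k, Nat.mod_lt _ (by omega)⟩) ?_⟩
  rintro ⟨u, j⟩ ⟨v, j'⟩ hpq
  rw [SimpleGraph.boxProd_adj] at hpq
  simp only [Ne, Fin.mk.injEq]
  rcases hpq with ⟨hMadj, h2⟩ | ⟨hpadj, h1⟩
  · simp only at h2
    subst h2
    intro hmod
    have hcc : (c u).val = (c v).val := by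
      have h3 : ((c u).val + j.val) % k = ((c v).val + j.val) % k := hmod
      have h4 : (c u).val % k = (c v).val % k := Nat.ModEq.add_right_cancel' _ h3
      rwa [Nat.mod_eq_of_lt (c u).isLt, Nat.mod_eq_of_lt (c v).isLt] at h4
    exact c.valid hMadj (Fin.ext hcc)
  · simp only at h1
    subst h1
    rw [SimpleGraph.pathGraph_adj] at hpadj
    have hgen : ∀ a b : ℕ, ¬ (a % k = (a + 1) % k) := by
      intro a _ hmod
      have h4 : (0 + a) % k = (1 + a) % k := by
        rw [zero_add, Nat.add_comm 1 a]; exact hmod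
      have h5 : 0 % k = 1 % k := Nat.ModEq.add_right_cancel' _ h4
      rw [Nat.zero_mod, Nat.mod_eq_of_lt (by omega : 1 < k)] at h5
      exact absurd h5.symm one_ne_zero
    rcases hpadj with h | h
    · intro hmod
      rw [← h] at hmod
      exact hgen ((c u).val + j.val) 0 (by rw [← Nat.add_assoc] at hmod; exact hmod)
    · intro hmod
      rw [← h] at hmod
      exact hgen ((c u).val + j'.val) 0 (by rw [← Nat.add_assoc] at hmod; exact hmod.symm)

lemma product_pullback (M : SimpleGraph V) (n' : ℕ) (hn' : 1 ≤ n') (t : ℕ)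
    (h : (M.boxProd (pathGraph n')).Colorable t) : M.Colorable t := by
  obtain ⟨c⟩ := h
  refine ⟨SimpleGraph.Coloring.mk (fun v => c (v, ⟨0, by omega⟩)) ?_⟩
  intro u v huv
  exact c.valid (by rw [SimpleGraph.boxProd_adj]; exact Or.inl ⟨huv, rfl⟩)

end Prod


/-- the Cartesian product of a strong `k`-chromatic-choosable graph
satisfying the edge condition with a path is chromatic-choosable. -/
theorem stmt_11 {V : Type*} [Fintype V] (M : SimpleGraph V) [Fintype M.edgeSet]
    (k n m : ℕ) (hk : 2 ≤ k) (hM : StrongCC M k)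
    (hn : Fintype.card V = n) (hm : M.edgeFinset.card = m)
    (hedge : m ≤ n * (k - 2)) (n' : ℕ) (hn' : 1 ≤ n') :
    listChromaticNumber (M.boxProd (pathGraph n')) = k ∧
      (M.boxProd (pathGraph n')).chromaticNumber = (k : ℕ∞) := by
  classical
  obtain ⟨hchi, hscc⟩ := hM
  subst hn
  subst hm
  have hedgeEx : ∃ u v, M.Adj u v := by
    by_contra h
    push_neg at h
    have h1 : M.Colorable 1 :=
      ⟨SimpleGraph.Coloring.mk (fun _ => (0 : Fin 1))
        (fun {u v} hadj => absurd hadj (h u v))⟩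
    have h2 := h1.chromaticNumber_le
    rw [hchi] at h2
    rw [Nat.cast_le] at h2
    omega
  obtain ⟨u₀, v₀, hadj⟩ := hedgeEx
  have hk3 : 3 ≤ k := by
    by_contra h
    have hk2 : k = 2 := by omega
    subst hk2
    have hz : Fintype.card V * (2 - 2) = 0 := by norm_num
    have hm0 : M.edgeFinset.card = 0 := by omega
    have hmem : s(u₀, v₀) ∈ M.edgeFinset := SimpleGraph.mem_edgeFinset.mpr hadj
    rw [Finset.card_eq_zero] at hm0
    rw [hm0] at hmem
    exact absurd hmem (Finset.notMem_empty _)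
  have hcolk1 : ¬ M.Colorable (k-1) := by
    intro h
    have h2 := h.chromaticNumber_le
    rw [hchi, Nat.cast_le] at h2
    omega
  have hMk : M.Colorable k := by
    have h := M.colorable_chromaticNumber_of_fintype
    rw [hchi] at h
    simpa using h
  letI : DecidableEq V := Classical.decEq V
  have hG'k : (M.boxProd (pathGraph n')).Colorable k :=
    product_colorable_k M k (by omega) hMk n'
  have hG'notk1 : ¬ (M.boxProd (pathGraph n')).Colorable (k-1) :=
    fun h => hcolk1 (product_pullback M n' hn' _ h)
  have hchiG' : (M.boxProd (pathGraph n')).chromaticNumber = (k:ℕ∞) := by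
    refine le_antisymm hG'k.chromaticNumber_le ?_
    by_contra hlt
    push_neg at hlt
    have hne : (M.boxProd (pathGraph n')).chromaticNumber ≠ ⊤ := ne_top_of_lt hlt
    obtain ⟨j, hj⟩ := ENat.ne_top_iff_exists.mp hne
    have hfin := (M.boxProd (pathGraph n')).colorable_chromaticNumber_of_fintype
    rw [← hj] at hfin hlt
    have hjk : j < k := by simpa using hlt
    have hfin' : (M.boxProd (pathGraph n')).Colorable j := by simpa using hfin
    exact hG'notk1 (hfin'.mono (by omega))
  have hchoosek : Choosable (M.boxProd (pathGraph n')) k := by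
    intro L hL
    exact product_listColorable M k hk3 hscc u₀ v₀ hadj hcolk1 hedge n' hn' L hL
  have hnotchoose : ¬ Choosable (M.boxProd (pathGraph n')) (k-1) := by
    intro h
    obtain ⟨f, hf1, hf2⟩ := h (fun _ => Finset.range (k-1))
      (fun v => by rw [Finset.card_range])
    apply hG'notk1
    refine ⟨SimpleGraph.Coloring.mk (fun p => ⟨f p, Finset.mem_range.mp (hf1 p)⟩) ?_⟩
    intro p q hpq hf
    exact hf2 p q hpq (by simpa using congrArg Fin.val hf)
  constructor
  · apply le_antisymm
    · exact Nat.sInf_le hchoosek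
    · have hmem : k ∈ {m | Choosable (M.boxProd (pathGraph n')) m} := hchoosek
      apply le_csInf ⟨k, hmem⟩
      intro b hb
      by_contra hbk
      push_neg at hbk
      exact hnotchoose (fun L hL => hb L (fun v => le_trans (by omega) (hL v)))
  · exact hchiG'
end

section
/- For any graph G and natural numbers n, k, the list color function satisfies P_ℓ(G, k−n) · P(K_n, k) ≤ P_ℓ(G ∨ K_n, k) ≤ P(G, k−n) · P(K_n, k), where P(K_n, k) = ∏_{i=0}^{n−1}(k−i). In particular, if P_ℓ(G, m) = P(G, m) for all m, then P_ℓ(G ∨ K_n, k) = P(G ∨ K_n, k) for all k. -/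
open SimpleGraph Finset

section Helpers
variable {V : Type*}

lemma properSet_finite [Finite V] (G : SimpleGraph V) (L : V → Finset ℕ) :
    {f : V → ℕ | IsProperListColoring G L f}.Finite := by
  apply Set.Finite.subset (Set.Finite.pi (fun v : V => (L v).finite_toSet))
  intro f hf v _
  exact hf.1 v

lemma numColorings_mono [Finite V] (G : SimpleGraph V) {L L' : V → Finset ℕ}
    (h : ∀ v, L' v ⊆ L v) : numColorings G L' ≤ numColorings G L := by
  apply Set.ncard_le_ncard _ (properSet_finite G L)
  intro f hf
  exact ⟨fun v => h v (hf.1 v), hf.2⟩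

lemma numColorings_relabel [Finite V] (G : SimpleGraph V) (L : V → Finset ℕ)
    (σ : ℕ → ℕ) (hσ : Set.InjOn σ (⋃ v, (L v : Set ℕ))) :
    numColorings G (fun v => (L v).image σ) = numColorings G L := by
  unfold numColorings
  have himg : {f : V → ℕ | IsProperListColoring G (fun v => (L v).image σ) f}
      = (fun f => σ ∘ f) '' {f | IsProperListColoring G L f} := by
    ext g
    constructor
    · rintro ⟨hmem, hadj⟩
      choose f hf1 hf2 using fun v => Finset.mem_image.1 (hmem v)
      refine ⟨f, ⟨hf1, fun u v huv hne => ?_⟩, funext hf2⟩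
      exact hadj u v huv (by rw [← hf2 u, ← hf2 v, hne])
    · rintro ⟨f, ⟨h1, h2⟩, rfl⟩
      refine ⟨fun v => Finset.mem_image_of_mem σ (h1 v), fun u v huv hne => ?_⟩
      exact h2 u v huv
        (hσ (Set.mem_iUnion.2 ⟨u, h1 u⟩) (Set.mem_iUnion.2 ⟨v, h1 v⟩) hne)
  rw [himg]
  apply Set.ncard_image_of_injOn
  intro f hf g hg hfg
  funext v
  exact hσ (Set.mem_iUnion.2 ⟨v, hf.1 v⟩) (Set.mem_iUnion.2 ⟨v, hg.1 v⟩) (congrFun hfg v)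

lemma numColorings_const_set [Finite V] (G : SimpleGraph V) (S : Finset ℕ) :
    numColorings G (fun _ => S) = chromPoly G S.card := by
  classical
  set m := S.card with hm
  set σ : ℕ → ℕ := fun i => if h : i < m then S.orderEmbOfFin rfl ⟨i, h⟩ else 0 with hσdef
  have himg : (Finset.range m).image σ = S := by
    ext x
    simp only [Finset.mem_image, Finset.mem_range]
    constructor
    · rintro ⟨i, hi, rfl⟩
      simp [hσdef, hi, Finset.orderEmbOfFin_mem]
    · intro hx
      have : x ∈ Set.range (S.orderEmbOfFin (rfl : S.card = m)) := by
        rw [Finset.range_orderEmbOfFin]; exact hx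
      obtain ⟨i, hi⟩ := this
      exact ⟨i, i.2, by simp only [hσdef]; rw [dif_pos (show (i:ℕ) < m from i.2)]; exact hi⟩
  have hinj : Set.InjOn σ (⋃ _v : V, ((Finset.range m : Finset ℕ) : Set ℕ)) := by
    intro a ha b hb hab
    rcases Set.mem_iUnion.1 ha with ⟨v, ha⟩
    rcases Set.mem_iUnion.1 hb with ⟨w, hb⟩
    simp only [Finset.coe_range, Set.mem_Iio] at ha hb
    simpa [hσdef, ha, hb] using hab
  have := numColorings_relabel G (fun _ : V => Finset.range m) σ hinj
  unfold chromPoly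
  rw [← this]
  exact congrArg _ (funext fun v => himg.symm)

end Helpers
section Helpers2

lemma top_proper_iff {n : ℕ} (M : Fin n → Finset ℕ) (g : Fin n → ℕ) :
    IsProperListColoring (⊤ : SimpleGraph (Fin n)) M g ↔
      (∀ j, g j ∈ M j) ∧ Function.Injective g := by
  constructor
  · rintro ⟨h1, h2⟩
    refine ⟨h1, fun i j hij => ?_⟩
    by_contra hne
    exact h2 i j hne hij
  · rintro ⟨h1, h2⟩
    exact ⟨h1, fun i j hij hne => hij (h2 hne)⟩

/-- The Finset of proper list colorings. -/
noncomputable def colorFinset {V : Type*} [Finite V] (G : SimpleGraph V)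
    (L : V → Finset ℕ) : Finset (V → ℕ) :=
  (properSet_finite G L).toFinset

lemma mem_colorFinset {V : Type*} [Finite V] {G : SimpleGraph V} {L : V → Finset ℕ}
    {f : V → ℕ} : f ∈ colorFinset G L ↔ IsProperListColoring G L f := by
  simp [colorFinset, Set.Finite.mem_toFinset]

lemma numColorings_eq_card {V : Type*} [Finite V] (G : SimpleGraph V)
    (L : V → Finset ℕ) : numColorings G L = (colorFinset G L).card := by
  rw [numColorings, Set.ncard_eq_toFinset_card _ (properSet_finite G L)]
  rfl

/-- Fiberwise decomposition for complete graphs: peel off the last vertex. -/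
lemma top_card_succ (n : ℕ) (M : Fin (n + 1) → Finset ℕ) :
    (colorFinset (⊤ : SimpleGraph (Fin (n + 1))) M).card =
      ∑ g ∈ colorFinset (⊤ : SimpleGraph (Fin n)) (M ∘ Fin.castSucc),
        (M (Fin.last n) \ Finset.image g Finset.univ).card := by
  classical
  have hmaps : ∀ f ∈ colorFinset (⊤ : SimpleGraph (Fin (n+1))) M,
      f ∘ Fin.castSucc ∈ colorFinset (⊤ : SimpleGraph (Fin n)) (M ∘ Fin.castSucc) := by
    intro f hf
    rw [mem_colorFinset, top_proper_iff] at hf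
    rw [mem_colorFinset, top_proper_iff]
    exact ⟨fun j => hf.1 _, fun i j hij => Fin.castSucc_injective n (hf.2 hij)⟩
  rw [Finset.card_eq_sum_card_fiberwise hmaps]
  · apply Finset.sum_congr rfl
    intro g hg
    rw [mem_colorFinset, top_proper_iff] at hg
    apply Finset.card_bij (fun f _ => f (Fin.last n))
    · intro f hf
      simp only [Finset.mem_filter, mem_colorFinset, top_proper_iff] at hf
      obtain ⟨⟨hmem, hinj⟩, hrest⟩ := hf
      simp only [Finset.mem_sdiff, Finset.mem_image, Finset.mem_univ, true_and]
      refine ⟨hmem _, ?_⟩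
      rintro ⟨j, hj⟩
      have : f (Fin.castSucc j) = f (Fin.last n) := by
        rw [← hj]; exact congrFun hrest j
      exact absurd (hinj this) (Fin.castSucc_lt_last j).ne
    · intro f hf f' hf' heq
      simp only [Finset.mem_filter] at hf hf'
      funext i
      refine Fin.lastCases ?_ ?_ i
      · exact heq
      · intro j
        have := congrFun (hf.2.trans hf'.2.symm) j
        exact this
    · intro x hx
      simp only [Finset.mem_sdiff, Finset.mem_image, Finset.mem_univ, true_and] at hx
      refine ⟨Fin.snoc g x, ?_, by simp⟩
      simp only [Finset.mem_filter, mem_colorFinset, top_proper_iff]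
      refine ⟨⟨?_, ?_⟩, ?_⟩
      · intro j
        refine Fin.lastCases ?_ ?_ j
        · simpa using hx.1
        · intro j; simpa using hg.1 j
      · intro i j hij
        rcases Fin.eq_castSucc_or_eq_last i with ⟨i', rfl⟩ | rfl <;>
          rcases Fin.eq_castSucc_or_eq_last j with ⟨j', rfl⟩ | rfl
        · simp only [Fin.snoc_castSucc] at hij
          exact congrArg Fin.castSucc (hg.2 hij)
        · simp only [Fin.snoc_castSucc, Fin.snoc_last] at hij
          exact absurd ⟨i', hij⟩ hx.2
        · simp only [Fin.snoc_castSucc, Fin.snoc_last] at hij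
          exact absurd ⟨j', hij.symm⟩ hx.2
        · rfl
      · funext j; simp

lemma top_count_lower : ∀ (n : ℕ) (M : Fin n → Finset ℕ) (k : ℕ), (∀ j, k ≤ (M j).card) →
    (∏ i ∈ Finset.range n, (k - i)) ≤ numColorings (⊤ : SimpleGraph (Fin n)) M := by
  intro n
  induction n with
  | zero =>
    intro M k _
    simp only [Finset.range_zero, Finset.prod_empty]
    rw [numColorings]
    have : {f : Fin 0 → ℕ | IsProperListColoring ⊤ M f} = Set.univ := by
      ext f
      simp only [Set.mem_setOf_eq, Set.mem_univ, iff_true]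
      exact ⟨fun j => j.elim0, fun u v _ => u.elim0⟩
    rw [this]
    simp [Set.ncard_univ]
  | succ n ih =>
    intro M k hk
    rw [numColorings_eq_card, top_card_succ, Finset.prod_range_succ]
    calc (∏ i ∈ Finset.range n, (k - i)) * (k - n)
        ≤ (colorFinset (⊤ : SimpleGraph (Fin n)) (M ∘ Fin.castSucc)).card * (k - n) := by
          apply Nat.mul_le_mul_right
          rw [← numColorings_eq_card]
          exact ih _ k (fun j => hk _)
      _ ≤ _ := by
          have hb : ∀ g ∈ colorFinset (⊤ : SimpleGraph (Fin n)) (M ∘ Fin.castSucc),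
              k - n ≤ (M (Fin.last n) \ Finset.image g Finset.univ).card := by
            intro g _
            have h1 : (Finset.image g Finset.univ).card ≤ n :=
              Finset.card_image_le.trans (by simp)
            calc k - n ≤ (M (Fin.last n)).card - (Finset.image g Finset.univ).card :=
                  tsub_le_tsub (hk _) h1
              _ ≤ _ := Finset.le_card_sdiff _ _
          simpa [smul_eq_mul] using Finset.card_nsmul_le_sum _ _ _ hb
lemma top_count_range : ∀ n k : ℕ, numColorings (⊤ : SimpleGraph (Fin n)) (fun _ => Finset.range k)
    = ∏ i ∈ Finset.range n, (k - i) := by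
  intro n
  induction n with
  | zero =>
    intro k
    simp only [Finset.range_zero, Finset.prod_empty]
    rw [numColorings]
    have : {f : Fin 0 → ℕ | IsProperListColoring ⊤ (fun _ => Finset.range k) f} = Set.univ := by
      ext f
      simp only [Set.mem_setOf_eq, Set.mem_univ, iff_true]
      exact ⟨fun j => j.elim0, fun u v _ => u.elim0⟩
    rw [this]
    simp [Set.ncard_univ]
  | succ n ih =>
    intro k
    rw [numColorings_eq_card, top_card_succ, Finset.prod_range_succ]
    have hterm : ∀ g ∈ colorFinset (⊤ : SimpleGraph (Fin n))
        ((fun _ => Finset.range k) ∘ Fin.castSucc),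
        (Finset.range k \ Finset.image g Finset.univ).card = k - n := by
      intro g hg
      rw [mem_colorFinset, top_proper_iff] at hg
      rw [Finset.card_sdiff_of_subset]
      · rw [Finset.card_image_of_injective _ hg.2]
        simp
      · intro x hx
        simp only [Finset.mem_image, Finset.mem_univ, true_and] at hx
        obtain ⟨j, rfl⟩ := hx
        exact hg.1 j
    rw [Finset.sum_congr rfl hterm, Finset.sum_const, smul_eq_mul, ← numColorings_eq_card]
    rw [show ((fun _ : Fin (n+1) => Finset.range k) ∘ Fin.castSucc)
      = (fun _ : Fin n => Finset.range k) from rfl, ih]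
section Join
variable {V : Type*}

lemma joinK_adj_inl_inl (G : SimpleGraph V) (n : ℕ) (u v : V) :
    (joinK G n).Adj (Sum.inl u) (Sum.inl v) ↔ G.Adj u v := by
  simp only [joinK, SimpleGraph.fromRel_adj]
  constructor
  · rintro ⟨hne, h | h⟩
    · exact h
    · exact h.symm
  · intro h
    exact ⟨by simpa using G.ne_of_adj h, Or.inl h⟩

lemma joinK_adj_inl_inr (G : SimpleGraph V) (n : ℕ) (u : V) (j : Fin n) :
    (joinK G n).Adj (Sum.inl u) (Sum.inr j) := by
  simp only [joinK, SimpleGraph.fromRel_adj]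
  exact ⟨by simp, Or.inl trivial⟩

lemma joinK_adj_inr_inr (G : SimpleGraph V) (n : ℕ) (i j : Fin n) (h : i ≠ j) :
    (joinK G n).Adj (Sum.inr i) (Sum.inr j) := by
  simp only [joinK, SimpleGraph.fromRel_adj]
  exact ⟨by simpa using h, Or.inl trivial⟩

lemma join_count [Fintype V] (G : SimpleGraph V) (n : ℕ) (L : (V ⊕ Fin n) → Finset ℕ) :
    numColorings (joinK G n) L =
      ∑ g ∈ colorFinset (⊤ : SimpleGraph (Fin n)) (fun j => L (Sum.inr j)),
        numColorings G (fun v => L (Sum.inl v) \ Finset.image g Finset.univ) := by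
  classical
  rw [numColorings_eq_card]
  have hmaps : ∀ f ∈ colorFinset (joinK G n) L,
      (fun j => f (Sum.inr j)) ∈ colorFinset (⊤ : SimpleGraph (Fin n)) (fun j => L (Sum.inr j)) := by
    intro f hf
    rw [mem_colorFinset] at hf
    rw [mem_colorFinset, top_proper_iff]
    refine ⟨fun j => hf.1 _, fun i j hij => ?_⟩
    by_contra hne
    exact hf.2 _ _ (joinK_adj_inr_inr G n i j hne) hij
  rw [Finset.card_eq_sum_card_fiberwise hmaps]
  apply Finset.sum_congr rfl
  intro g hg
  rw [mem_colorFinset, top_proper_iff] at hg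
  rw [numColorings_eq_card]
  apply Finset.card_bij (fun f _ => fun v => f (Sum.inl v))
  · intro f hf
    simp only [Finset.mem_filter, mem_colorFinset] at hf
    obtain ⟨hf, hrest⟩ := hf
    rw [mem_colorFinset]
    refine ⟨fun v => ?_, fun u v huv => hf.2 _ _ ((joinK_adj_inl_inl G n u v).2 huv)⟩
    simp only [Finset.mem_sdiff, Finset.mem_image, Finset.mem_univ, true_and]
    refine ⟨hf.1 _, ?_⟩
    rintro ⟨j, hj⟩
    have : g j = f (Sum.inr j) := congrFun hrest.symm j
    exact hf.2 _ _ (joinK_adj_inl_inr G n v j) (by rw [← hj, this])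
  · intro f hf f' hf' heq
    simp only [Finset.mem_filter] at hf hf'
    funext x
    cases x with
    | inl v => exact congrFun heq v
    | inr j => exact (congrFun hf.2 j).trans (congrFun hf'.2 j).symm
  · intro h hh
    rw [mem_colorFinset] at hh
    refine ⟨Sum.elim h g, ?_, rfl⟩
    simp only [Finset.mem_filter, mem_colorFinset]
    refine ⟨⟨?_, ?_⟩, rfl⟩
    · intro x
      cases x with
      | inl v => exact Finset.sdiff_subset (hh.1 v)
      | inr j => exact hg.1 j
    · intro a b hab
      have hG : ∀ v : V, ∀ j : Fin n, h v ≠ g j := by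
        intro v j hvj
        have := hh.1 v
        simp only [Finset.mem_sdiff, Finset.mem_image, Finset.mem_univ, true_and] at this
        exact this.2 ⟨j, hvj.symm⟩
      cases a with
      | inl u =>
        cases b with
        | inl v => exact hh.2 u v ((joinK_adj_inl_inl G n u v).1 hab)
        | inr j => exact hG u j
      | inr i =>
        cases b with
        | inl v => exact fun he => hG v i he.symm
        | inr j =>
          intro he
          have : i ≠ j := by rintro rfl; exact ((joinK G n).irrefl hab)
          exact this (hg.2 he)
lemma listColorFunction_le [Finite V] (G : SimpleGraph V) (k : ℕ) (L : V → Finset ℕ)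
    (hL : ∀ v, (L v).card = k) : listColorFunction G k ≤ numColorings G L :=
  Nat.sInf_le ⟨L, hL, rfl⟩

lemma exists_min_assignment [Finite V] (G : SimpleGraph V) (k : ℕ) :
    ∃ L : V → Finset ℕ, (∀ v, (L v).card = k) ∧ listColorFunction G k = numColorings G L := by
  have hne : {m | ∃ L : V → Finset ℕ, (∀ v, (L v).card = k) ∧ m = numColorings G L}.Nonempty :=
    ⟨numColorings G (fun _ => Finset.range k),
      fun _ => Finset.range k, fun _ => Finset.card_range k, rfl⟩
  exact Nat.sInf_mem hne

lemma chromPoly_joinK [Fintype V] (G : SimpleGraph V) (n k : ℕ) :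
    chromPoly (joinK G n) k = chromPoly G (k - n) * ∏ i ∈ Finset.range n, (k - i) := by
  classical
  rw [show chromPoly (joinK G n) k
    = numColorings (joinK G n) (fun _ => Finset.range k) from rfl, join_count]
  have hterm : ∀ g ∈ colorFinset (⊤ : SimpleGraph (Fin n)) (fun _ => Finset.range k),
      numColorings G (fun _ => Finset.range k \ Finset.image g Finset.univ)
        = chromPoly G (k - n) := by
    intro g hg
    rw [mem_colorFinset, top_proper_iff] at hg
    have hcard : (Finset.range k \ Finset.image g Finset.univ).card = k - n := by
      rw [Finset.card_sdiff_of_subset]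
      · rw [Finset.card_image_of_injective _ hg.2]; simp
      · intro x hx
        simp only [Finset.mem_image, Finset.mem_univ, true_and] at hx
        obtain ⟨j, rfl⟩ := hx
        exact hg.1 j
    rw [← hcard]
    exact numColorings_const_set G _
  rw [Finset.sum_congr rfl hterm, Finset.sum_const, smul_eq_mul, ← numColorings_eq_card,
    top_count_range n k, Nat.mul_comm]

end Join
theorem stmt_13' {V : Type*} [Fintype V] (G : SimpleGraph V) (n k : ℕ) :
    chromPoly (⊤ : SimpleGraph (Fin n)) k = (∏ i ∈ Finset.range n, (k - i)) ∧
    listColorFunction G (k - n) * ∏ i ∈ Finset.range n, (k - i)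
      ≤ listColorFunction (joinK G n) k ∧
    listColorFunction (joinK G n) k ≤ chromPoly G (k - n) * ∏ i ∈ Finset.range n, (k - i) ∧
    ((∀ m : ℕ, listColorFunction G m = chromPoly G m) →
      ∀ k' : ℕ, listColorFunction (joinK G n) k' = chromPoly (joinK G n) k') := by
  classical
  have upper : ∀ k : ℕ, listColorFunction (joinK G n) k
      ≤ chromPoly G (k - n) * ∏ i ∈ Finset.range n, (k - i) := by
    intro k
    rw [← chromPoly_joinK]
    exact listColorFunction_le (joinK G n) k (fun _ => Finset.range k)
      (fun _ => Finset.card_range k)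
  have lower : ∀ k : ℕ, listColorFunction G (k - n) * ∏ i ∈ Finset.range n, (k - i)
      ≤ listColorFunction (joinK G n) k := by
    intro k
    obtain ⟨L, hL, hEq⟩ := exists_min_assignment (joinK G n) k
    rw [hEq, join_count]
    have hA : (∏ i ∈ Finset.range n, (k - i))
        ≤ (colorFinset (⊤ : SimpleGraph (Fin n)) (fun j => L (Sum.inr j))).card := by
      rw [← numColorings_eq_card]
      exact top_count_lower n _ k (fun j => (hL _).ge)
    have hB : ∀ g ∈ colorFinset (⊤ : SimpleGraph (Fin n)) (fun j => L (Sum.inr j)),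
        listColorFunction G (k - n)
          ≤ numColorings G (fun v => L (Sum.inl v) \ Finset.image g Finset.univ) := by
      intro g _
      have hcard : ∀ v, k - n ≤ (L (Sum.inl v) \ Finset.image g Finset.univ).card := by
        intro v
        have h1 : (Finset.image g Finset.univ).card ≤ n :=
          Finset.card_image_le.trans (by simp)
        calc k - n ≤ (L (Sum.inl v)).card - (Finset.image g Finset.univ).card :=
              tsub_le_tsub (hL _).ge h1
          _ ≤ _ := Finset.le_card_sdiff _ _
      choose S hS1 hS2 using fun v => Finset.exists_subset_card_eq (hcard v)
      calc listColorFunction G (k - n) ≤ numColorings G S :=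
            listColorFunction_le G _ S hS2
        _ ≤ _ := numColorings_mono G hS1
    calc listColorFunction G (k - n) * ∏ i ∈ Finset.range n, (k - i)
        ≤ (colorFinset (⊤ : SimpleGraph (Fin n)) (fun j => L (Sum.inr j))).card
            * listColorFunction G (k - n) := by
          rw [Nat.mul_comm]
          exact Nat.mul_le_mul_right _ hA
      _ ≤ _ := by
          simpa [smul_eq_mul] using Finset.card_nsmul_le_sum _ _ _ hB
  refine ⟨top_count_range n k, lower k, upper k, ?_⟩
  intro h k'
  apply le_antisymm
  · rw [chromPoly_joinK]
    exact upper k'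
  · rw [chromPoly_joinK, ← h (k' - n)]
    exact lower k'

/-- bounds for the list color function of a join with a complete graph. -/
theorem stmt_13 {V : Type*} [Fintype V] (G : SimpleGraph V) (n k : ℕ) :
    chromPoly (⊤ : SimpleGraph (Fin n)) k = (∏ i ∈ Finset.range n, (k - i)) ∧
    listColorFunction G (k - n) * ∏ i ∈ Finset.range n, (k - i)
      ≤ listColorFunction (joinK G n) k ∧
    listColorFunction (joinK G n) k ≤ chromPoly G (k - n) * ∏ i ∈ Finset.range n, (k - i) ∧
    ((∀ m : ℕ, listColorFunction G m = chromPoly G m) →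
      ∀ k' : ℕ, listColorFunction (joinK G n) k' = chromPoly (joinK G n) k') := stmt_13' G n k
end Helpers2
end
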